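/- arXiv:2004.05423 — 2 statements merged into one kernel-verified Lean document; each statement's English description precedes it below -/
import Mathlib

section
/- Let h(t) = ∑_{i=0}^s h_it^i be a real polynomial of degree s ≤ d, let ℓ = d+1-s, and let (p,q) be the symmetric decomposition of h with respect to d. Then there are uniquely determined real polynomials p_ℓ(t) = ∑_{i=0}^{d} p_{ℓ,i}t^i and q_ℓ(t) = ∑_{i=0}^{s-1} q_{ℓ,i}t^i with p_{ℓ,i} = p_{ℓ,d-i} for all 0 ≤ i ≤ d and q_{ℓ,i} = q_{ℓ,s-1-i} for all 0 ≤ i ≤ s-1, such that (1+t+⋯+t^{ℓ-1})h(t) = p_ℓ(t) + t^ℓ q_ℓ(t). Moreover, with the convention h_i := 0 for i ∉ {0,1,…,s}, p_{ℓ,i} = h_0 + ⋯ + h_i − h_d − ⋯ − h_{d+1-i} and q_{ℓ,i} = −h_0 − ⋯ − h_i + h_s + ⋯ + h_{s-i}, and p_ℓ(t) = p(t). -/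
open Polynomial

/-- The geometric polynomial `1 + t + ⋯ + t^{r-1}`. -/
noncomputable def geomPoly (r : ℕ) : ℝ[X] := ∑ j ∈ Finset.range r, X ^ j

/-- `sect r i f` is the polynomial `f^{⟨r,i⟩}` whose `n`-th coefficient is the `(r*n+i)`-th
coefficient of `f` (valid definition for `r ≥ 1`). -/
noncomputable def sect (r i : ℕ) (f : ℝ[X]) : ℝ[X] :=
  ∑ n ∈ Finset.range (f.natDegree + 1), C (f.coeff (r * n + i)) * X ^ n

/-- The operator `U_r^D h = (h·(1+t+⋯+t^{r-1})^D)^{⟨r,0⟩}`. -/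
noncomputable def Uop (r D : ℕ) (h : ℝ[X]) : ℝ[X] := sect r 0 (h * geomPoly r ^ D)

/-- `(p, q)` is the symmetric decomposition of `h` with respect to `d`. -/
def IsSymmDecomp (d : ℕ) (h p q : ℝ[X]) : Prop :=
  h = p + X * q ∧
  p.natDegree ≤ d ∧ (∀ i ≤ d, p.coeff i = p.coeff (d - i)) ∧
  q.natDegree ≤ d - 1 ∧ (∀ i ≤ d - 1, q.coeff i = q.coeff (d - 1 - i))

/-- A real polynomial is real-rooted if it is zero or all of its complex roots are real. -/
def RealRooted (f : ℝ[X]) : Prop :=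
  f = 0 ∨ ∀ z : ℂ, aeval z f = 0 → z.im = 0

/-- The real roots of `f`, with multiplicity, in weakly decreasing order. -/
noncomputable def descRoots (f : ℝ[X]) : List ℝ := (f.roots.sort (· ≤ ·)).reverse

/-- `Interlaces f g` means `f ⪯ g`: both are real-rooted and, unless one of them is zero,
the decreasingly ordered root lists `s` of `f` and `t` of `g` satisfy
`⋯ ≤ s_2 ≤ t_2 ≤ s_1 ≤ t_1` (with `deg g = deg f` or `deg f + 1`). -/
def Interlaces (f g : ℝ[X]) : Prop :=
  RealRooted f ∧ RealRooted g ∧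
  (f = 0 ∨ g = 0 ∨
    (((descRoots g).length = (descRoots f).length ∨
      (descRoots g).length = (descRoots f).length + 1) ∧
     (∀ i, (hf : i < (descRoots f).length) → (hg : i < (descRoots g).length) →
        (descRoots f).get ⟨i, hf⟩ ≤ (descRoots g).get ⟨i, hg⟩) ∧
     (∀ i, (hg : i + 1 < (descRoots g).length) → (hf : i < (descRoots f).length) →
        (descRoots g).get ⟨i + 1, hg⟩ ≤ (descRoots f).get ⟨i, hf⟩)))

/-- The coefficient of `h` at an integer index, zero for negative indices. -/
noncomputable def coeffZ (h : ℝ[X]) (j : ℤ) : ℝ := if 0 ≤ j then h.coeff j.toNat else 0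

/-- Property (H): `h_0 + ⋯ + h_i ≥ h_d + h_{d-1} + ⋯ + h_{d-i+1}` for all `i`. -/
def PropH (d : ℕ) (h : ℝ[X]) : Prop :=
  ∀ i : ℕ, ∑ j ∈ Finset.range i, coeffZ h ((d : ℤ) - j) ≤ ∑ j ∈ Finset.range (i + 1), h.coeff j

/-- Property (S): `h_0 + ⋯ + h_i ≤ h_s + h_{s-1} + ⋯ + h_{s-i}` for all `i`. -/
def PropS (s : ℕ) (h : ℝ[X]) : Prop :=
  ∀ i : ℕ, ∑ j ∈ Finset.range (i + 1), h.coeff j ≤ ∑ j ∈ Finset.range (i + 1), coeffZ h ((s : ℤ) - j)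

section AuxStatement16
open Finset

noncomputable def Spart (h : ℝ[X]) (k : ℕ) : ℝ := ∑ j ∈ Finset.range (k+1), h.coeff j

noncomputable def Acoef (d : ℕ) (h : ℝ[X]) (i : ℕ) : ℝ :=
  ∑ j ∈ Finset.range (i + 1), h.coeff j - ∑ j ∈ Finset.range i, coeffZ h ((d : ℤ) - j)

noncomputable def Bcoef (s : ℕ) (h : ℝ[X]) (i : ℕ) : ℝ :=
  -(∑ j ∈ Finset.range (i + 1), h.coeff j) + ∑ j ∈ Finset.range (i + 1), coeffZ h ((s : ℤ) - j)

lemma coeff_sum_C_X (f : ℕ → ℝ) (n k : ℕ) :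
    (∑ i ∈ range n, C (f i) * X ^ i).coeff k = if k < n then f k else 0 := by
  rw [finset_sum_coeff]
  simp only [coeff_C_mul, coeff_X_pow, mul_ite, mul_one, mul_zero]
  simp [Finset.sum_ite_eq, Finset.mem_range]

lemma coeffZ_nat (h : ℝ[X]) (D j : ℕ) :
    coeffZ h ((D : ℤ) - j) = if j ≤ D then h.coeff (D - j) else 0 := by
  unfold coeffZ
  by_cases hj : j ≤ D
  · rw [if_pos (by omega), if_pos hj]
    congr 1
    omega
  · rw [if_neg (by omega), if_neg hj]

lemma sum_coeff_reflect (h : ℝ[X]) (D : ℕ) : ∀ i ≤ D,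
    ∑ j ∈ range i, h.coeff (D - j) = Spart h D - Spart h (D - i) := by
  intro i
  induction i with
  | zero => intro _; simp [Spart]
  | succ i ih =>
    intro hiD
    rw [Finset.sum_range_succ, ih (by omega)]
    have h2 : Spart h (D - i) = Spart h (D - (i+1)) + h.coeff (D - i) := by
      unfold Spart
      have e : D - i = (D - (i+1)) + 1 := by omega
      rw [e, Finset.sum_range_succ]
    rw [h2]; ring

lemma Spart_stab (h : ℝ[X]) (s : ℕ) (hdeg : h.natDegree ≤ s) : ∀ k, s ≤ k → Spart h k = Spart h s := by
  intro k hk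
  unfold Spart
  symm
  apply Finset.sum_subset
  · exact Finset.range_subset_range.2 (by omega)
  · intro x hx hnx
    simp only [Finset.mem_range, not_lt] at hnx
    exact coeff_eq_zero_of_natDegree_lt (by omega)

lemma Acoef_eq (d : ℕ) (h : ℝ[X]) (i : ℕ) (hi : i ≤ d) :
    Acoef d h i = Spart h i + Spart h (d - i) - Spart h d := by
  unfold Acoef
  have h1 : ∑ j ∈ range i, coeffZ h ((d:ℤ) - j) = ∑ j ∈ range i, h.coeff (d - j) := by
    apply Finset.sum_congr rfl; intro j hj
    simp only [Finset.mem_range] at hj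
    rw [coeffZ_nat, if_pos (by omega)]
  rw [h1, sum_coeff_reflect h d i hi]
  unfold Spart; ring

lemma Bcoef_eq (s : ℕ) (h : ℝ[X]) (i : ℕ) (hi : i < s) :
    Bcoef s h i = Spart h s - Spart h (s - 1 - i) - Spart h i := by
  unfold Bcoef
  have h1 : ∑ j ∈ range (i+1), coeffZ h ((s:ℤ) - j) = ∑ j ∈ range (i+1), h.coeff (s - j) := by
    apply Finset.sum_congr rfl; intro j hj
    simp only [Finset.mem_range] at hj
    rw [coeffZ_nat, if_pos (by omega)]
  rw [h1, sum_coeff_reflect h s (i+1) (by omega)]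
  have e : s - (i+1) = s - 1 - i := by omega
  rw [e]; unfold Spart; ring

noncomputable def Ppoly (d : ℕ) (h : ℝ[X]) : ℝ[X] :=
  ∑ i ∈ Finset.range (d+1), C (Acoef d h i) * X ^ i
noncomputable def Qpoly (s : ℕ) (h : ℝ[X]) : ℝ[X] :=
  ∑ i ∈ Finset.range s, C (Bcoef s h i) * X ^ i

lemma Ppoly_coeff (d : ℕ) (h : ℝ[X]) (k : ℕ) :
    (Ppoly d h).coeff k = if k < d + 1 then Acoef d h k else 0 := coeff_sum_C_X _ _ _
lemma Qpoly_coeff (s : ℕ) (h : ℝ[X]) (k : ℕ) :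
    (Qpoly s h).coeff k = if k < s then Bcoef s h k else 0 := coeff_sum_C_X _ _ _

lemma Ppoly_deg (d : ℕ) (h : ℝ[X]) : (Ppoly d h).natDegree ≤ d := by
  rw [natDegree_le_iff_coeff_eq_zero]
  intro m hm; rw [Ppoly_coeff, if_neg (by omega)]

lemma Qpoly_deg (s : ℕ) (h : ℝ[X]) : (Qpoly s h).natDegree ≤ s - 1 := by
  rw [natDegree_le_iff_coeff_eq_zero]
  intro m hm; rw [Qpoly_coeff, if_neg (by omega)]

lemma Ppoly_sym (d : ℕ) (h : ℝ[X]) : ∀ i ≤ d, (Ppoly d h).coeff i = (Ppoly d h).coeff (d - i) := by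
  intro i hi
  rw [Ppoly_coeff, Ppoly_coeff, if_pos (by omega), if_pos (by omega),
    Acoef_eq d h i hi, Acoef_eq d h (d - i) (by omega)]
  rw [show d - (d - i) = i by omega]
  ring

lemma Qpoly_sym (s : ℕ) (h : ℝ[X]) :
    ∀ i ≤ s - 1, (Qpoly s h).coeff i = (Qpoly s h).coeff (s - 1 - i) := by
  intro i hi
  rcases Nat.eq_zero_or_pos s with hs | hs
  · subst hs
    rw [Qpoly_coeff, Qpoly_coeff, if_neg (by omega), if_neg (by omega)]
  · rw [Qpoly_coeff, Qpoly_coeff, if_pos (by omega), if_pos (by omega),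
      Bcoef_eq s h i (by omega), Bcoef_eq s h (s - 1 - i) (by omega)]
    rw [show s - 1 - (s - 1 - i) = i by omega]
    ring

lemma coeff_add_X_pow_mul (P Q : ℝ[X]) (l n : ℕ) :
    (P + X ^ l * Q).coeff n = P.coeff n + if l ≤ n then Q.coeff (n - l) else 0 := by
  rw [coeff_add, X_pow_mul, coeff_mul_X_pow']

lemma geom_mul_coeff (l : ℕ) (h : ℝ[X]) (n : ℕ) :
    (geomPoly l * h).coeff n = Spart h n - (if l ≤ n then Spart h (n - l) else 0) := by
  unfold geomPoly
  rw [Finset.sum_mul, finset_sum_coeff]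
  simp only [X_pow_mul, coeff_mul_X_pow']
  by_cases hn : l ≤ n
  · rw [if_pos hn]
    have e2 : ∑ j ∈ range l, (if j ≤ n then h.coeff (n - j) else 0)
        = ∑ j ∈ range l, h.coeff (n - j) := by
      apply Finset.sum_congr rfl
      intro j hj
      simp only [Finset.mem_range] at hj
      rw [if_pos (by omega)]
    rw [e2, sum_coeff_reflect h n l hn]
  · rw [if_neg hn, sub_zero]
    have e3 : ∑ j ∈ range l, (if j ≤ n then h.coeff (n-j) else 0)
        = ∑ j ∈ range (n+1), (if j ≤ n then h.coeff (n-j) else 0) := by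
      symm
      apply Finset.sum_subset (Finset.range_subset_range.2 (by omega))
      intro x hx hnx
      simp only [Finset.mem_range, not_lt] at hnx
      rw [if_neg (by omega)]
    have e4 : ∑ j ∈ range (n+1), (if j ≤ n then h.coeff (n-j) else 0)
        = ∑ j ∈ range (n+1), h.coeff (n - j) := by
      apply Finset.sum_congr rfl
      intro j hj
      simp only [Finset.mem_range] at hj
      rw [if_pos (by omega)]
    rw [e3, e4]
    have e5 := Finset.sum_range_reflect (fun j => h.coeff j) (n+1)
    simp only [Nat.add_sub_cancel] at e5
    exact e5.trans rfl

lemma exist_eq (d s l : ℕ) (h : ℝ[X]) (hdeg : h.natDegree = s) (hsd : s ≤ d)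
    (hl : l = d + 1 - s) : geomPoly l * h = Ppoly d h + X ^ l * Qpoly s h := by
  have hstab : ∀ k, s ≤ k → Spart h k = Spart h s := Spart_stab h s (le_of_eq hdeg)
  ext n
  rw [coeff_add_X_pow_mul, geom_mul_coeff, Ppoly_coeff]
  by_cases hnl : l ≤ n
  · rw [if_pos hnl, if_pos hnl, Qpoly_coeff]
    by_cases hnd : n ≤ d
    · have hs1 : 1 ≤ s := by omega
      rw [if_pos (show n < d + 1 by omega), if_pos (show n - l < s by omega),
        Acoef_eq d h n hnd, Bcoef_eq s h (n - l) (by omega)]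
      have e1 : Spart h (d - n) = Spart h (s - 1 - (n - l)) := by
        rw [show d - n = s - 1 - (n - l) by omega]
      have e2 : Spart h d = Spart h s := hstab d hsd
      linarith
    · rw [if_neg (show ¬ n < d + 1 by omega), if_neg (show ¬ n - l < s by omega)]
      have e1 : Spart h n = Spart h s := hstab n (by omega)
      have e2 : Spart h (n - l) = Spart h s := hstab (n - l) (by omega)
      linarith
  · rw [if_neg hnl, if_neg hnl]
    have hnd : n ≤ d := by omega
    rw [if_pos (show n < d + 1 by omega), Acoef_eq d h n hnd]
    have e1 : Spart h (d - n) = Spart h s := hstab (d - n) (by omega)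
    have e2 : Spart h d = Spart h s := hstab d hsd
    linarith

lemma uniq (d s l : ℕ) (hsd : s ≤ d) (hl : l = d + 1 - s)
    (P Q P' Q' : ℝ[X])
    (hPd : P.natDegree ≤ d) (hPsym : ∀ i ≤ d, P.coeff i = P.coeff (d - i))
    (hQd : Q.natDegree ≤ s - 1) (hQsym : ∀ i ≤ s - 1, Q.coeff i = Q.coeff (s - 1 - i))
    (hPd' : P'.natDegree ≤ d) (hPsym' : ∀ i ≤ d, P'.coeff i = P'.coeff (d - i))
    (hQd' : Q'.natDegree ≤ s - 1) (hQsym' : ∀ i ≤ s - 1, Q'.coeff i = Q'.coeff (s - 1 - i))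
    (heq : P + X ^ l * Q = P' + X ^ l * Q') : P = P' ∧ Q = Q' := by
  have hl1 : 1 ≤ l := by omega
  set R := P - P' with hR
  set S := Q - Q' with hS
  have hR0 : ∀ i, d < i → R.coeff i = 0 := by
    intro i hi
    rw [hR, coeff_sub, coeff_eq_zero_of_natDegree_lt (lt_of_le_of_lt hPd hi),
      coeff_eq_zero_of_natDegree_lt (lt_of_le_of_lt hPd' hi), sub_zero]
  have hS0 : ∀ i, s - 1 < i → S.coeff i = 0 := by
    intro i hi
    rw [hS, coeff_sub, coeff_eq_zero_of_natDegree_lt (lt_of_le_of_lt hQd hi),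
      coeff_eq_zero_of_natDegree_lt (lt_of_le_of_lt hQd' hi), sub_zero]
  have hRsym : ∀ i ≤ d, R.coeff i = R.coeff (d - i) := by
    intro i hi; rw [hR, coeff_sub, coeff_sub, hPsym i hi, hPsym' i hi]
  have hSsym : ∀ i ≤ s - 1, S.coeff i = S.coeff (s - 1 - i) := by
    intro i hi; rw [hS, coeff_sub, coeff_sub, hQsym i hi, hQsym' i hi]
  have hzero : R + X ^ l * S = 0 := by
    rw [hR, hS]; linear_combination heq
  have key : ∀ n, R.coeff n + (if l ≤ n then S.coeff (n - l) else 0) = 0 := by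
    intro n
    have e := congrArg (fun f : ℝ[X] => f.coeff n) hzero
    simpa [coeff_add, X_pow_mul, coeff_mul_X_pow'] using e
  have main : ∀ m k, s - k ≤ m → S.coeff k = 0 := by
    intro m
    induction m with
    | zero =>
      intro k hk
      have h1 : d < k + l := by omega
      have hkey := key (k + l)
      rw [hR0 _ h1, if_pos (by omega), show k + l - l = k by omega] at hkey
      linarith
    | succ m ih =>
      intro k hk
      by_cases h1 : d < k + l
      · have hkey := key (k + l)
        rw [hR0 _ h1, if_pos (by omega), show k + l - l = k by omega] at hkey
        linarith
      · have hkey1 := key (k + l)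
        rw [if_pos (by omega), show k + l - l = k by omega] at hkey1
        have e2 := hRsym (k + l) (by omega)
        by_cases h2 : d - (k + l) < l
        · have hkey2 := key (d - (k + l))
          rw [if_neg (by omega), add_zero] at hkey2
          linarith
        · have hkey2 := key (d - (k + l))
          rw [if_pos (by omega)] at hkey2
          have e3 := hSsym (d - (k + l) - l) (by omega)
          rw [show s - 1 - (d - (k + l) - l) = k + l by omega] at e3
          have e4 := ih (k + l) (by omega)
          linarith
  have hSz : S = 0 := by
    ext k
    rw [main (s - k) k le_rfl, coeff_zero]
  have hRz : R = 0 := by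
    rw [hSz, mul_zero, add_zero] at hzero
    exact hzero
  exact ⟨sub_eq_zero.mp hRz, sub_eq_zero.mp hSz⟩

lemma p_eq (d s : ℕ) (h p q : ℝ[X]) (hdeg : h.natDegree = s) (hsd : s ≤ d)
    (hpq : h = p + X * q) (hPd : p.natDegree ≤ d)
    (hPsym : ∀ i ≤ d, p.coeff i = p.coeff (d - i))
    (hQsym : ∀ i ≤ d - 1, q.coeff i = q.coeff (d - 1 - i)) :
    p = Ppoly d h := by
  have key : ∀ i ≤ d, p.coeff i = Acoef d h i := by
    intro i
    induction i with
    | zero =>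
      intro _
      have e := congrArg (fun f : ℝ[X] => f.coeff 0) hpq
      simp only [coeff_add, mul_coeff_zero, coeff_X_zero, zero_mul, add_zero] at e
      rw [← e]
      simp [Acoef]
    | succ i ih =>
      intro hi
      have hi' : i ≤ d := by omega
      have ihv := ih hi'
      have e1 : h.coeff (i + 1) = p.coeff (i + 1) + q.coeff i := by
        have := congrArg (fun f : ℝ[X] => f.coeff (i + 1)) hpq
        simpa [coeff_add, coeff_X_mul] using this
      have e2 : q.coeff i = q.coeff (d - 1 - i) := hQsym i (by omega)
      have e3 : h.coeff (d - i) = p.coeff (d - i) + q.coeff (d - 1 - i) := by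
        have := congrArg (fun f : ℝ[X] => f.coeff (d - i)) hpq
        rw [show d - i = (d - 1 - i) + 1 by omega] at this ⊢
        simpa [coeff_add, coeff_X_mul] using this
      have e4 : p.coeff (d - i) = p.coeff i := by
        have := hPsym (d - i) (by omega)
        rwa [show d - (d - i) = i by omega] at this
      have e5 : Acoef d h (i + 1) = Acoef d h i + h.coeff (i + 1) - h.coeff (d - i) := by
        unfold Acoef
        rw [Finset.sum_range_succ (f := fun j => h.coeff j) (n := i + 1),
          Finset.sum_range_succ (f := fun j => coeffZ h ((d : ℤ) - j)) (n := i),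
          coeffZ_nat, if_pos (by omega : i ≤ d)]
        ring
      linarith
  ext i
  rw [Ppoly_coeff]
  by_cases hi : i ≤ d
  · rw [if_pos (by omega), key i hi]
  · rw [if_neg (by omega), coeff_eq_zero_of_natDegree_lt (by omega)]

end AuxStatement16

/-- (Lemma `extendedStapledon`.) For `h` of degree `s ≤ d`, `ℓ = d+1-s`,
and symmetric decomposition `(p, q)` of `h`, there are unique symmetric polynomials `p_ℓ`
(w.r.t. `d`) and `q_ℓ` (w.r.t. `s-1`) with `(1+t+⋯+t^{ℓ-1})·h = p_ℓ + t^ℓ·q_ℓ`; moreover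
`p_{ℓ,i} = h_0+⋯+h_i − h_d−⋯−h_{d+1-i}`, `q_{ℓ,i} = −h_0−⋯−h_i + h_s+⋯+h_{s-i}`, and
`p_ℓ = p`. -/
theorem statement16 (d s ℓ : ℕ) (h : ℝ[X]) (hne : h ≠ 0) (hdeg : h.natDegree = s)
    (hsd : s ≤ d) (hℓ : ℓ = d + 1 - s)
    (p q : ℝ[X]) (hpq : IsSymmDecomp d h p q) :
    (∃! PQ : ℝ[X] × ℝ[X],
      PQ.1.natDegree ≤ d ∧ (∀ i ≤ d, PQ.1.coeff i = PQ.1.coeff (d - i)) ∧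
      PQ.2.natDegree ≤ s - 1 ∧ (∀ i ≤ s - 1, PQ.2.coeff i = PQ.2.coeff (s - 1 - i)) ∧
      geomPoly ℓ * h = PQ.1 + X ^ ℓ * PQ.2) ∧
    (∀ P Q : ℝ[X],
      (P.natDegree ≤ d ∧ (∀ i ≤ d, P.coeff i = P.coeff (d - i)) ∧
       Q.natDegree ≤ s - 1 ∧ (∀ i ≤ s - 1, Q.coeff i = Q.coeff (s - 1 - i)) ∧
       geomPoly ℓ * h = P + X ^ ℓ * Q) →
      (∀ i ≤ d, P.coeff i =
          ∑ j ∈ Finset.range (i + 1), h.coeff j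
            - ∑ j ∈ Finset.range i, coeffZ h ((d : ℤ) - j)) ∧
      (∀ i ≤ s - 1, Q.coeff i =
          -(∑ j ∈ Finset.range (i + 1), h.coeff j)
            + ∑ j ∈ Finset.range (i + 1), coeffZ h ((s : ℤ) - j)) ∧
      P = p) := by
  obtain ⟨hpq_eq, hpd, hpsym, hqd, hqsym⟩ := hpq
  have hP0d := Ppoly_deg d h
  have hP0sym := Ppoly_sym d h
  have hQ0d := Qpoly_deg s h
  have hQ0sym := Qpoly_sym s h
  have heq0 := exist_eq d s ℓ h hdeg hsd hℓ
  have huniq : ∀ P Q : ℝ[X],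
      (P.natDegree ≤ d ∧ (∀ i ≤ d, P.coeff i = P.coeff (d - i)) ∧
       Q.natDegree ≤ s - 1 ∧ (∀ i ≤ s - 1, Q.coeff i = Q.coeff (s - 1 - i)) ∧
       geomPoly ℓ * h = P + X ^ ℓ * Q) → P = Ppoly d h ∧ Q = Qpoly s h := by
    rintro P Q ⟨h1, h2, h3, h4, h5⟩
    exact uniq d s ℓ hsd hℓ P Q _ _ h1 h2 h3 h4 hP0d hP0sym hQ0d hQ0sym
      (h5.symm.trans heq0)
  constructor
  · refine ⟨(Ppoly d h, Qpoly s h), ⟨hP0d, hP0sym, hQ0d, hQ0sym, heq0⟩, ?_⟩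
    rintro ⟨P, Q⟩ hY
    obtain ⟨e1, e2⟩ := huniq P Q hY
    rw [Prod.mk.injEq]
    exact ⟨e1, e2⟩
  · intro P Q hc
    obtain ⟨eP, eQ⟩ := huniq P Q hc
    refine ⟨?_, ?_, ?_⟩
    · intro i hid
      rw [eP, Ppoly_coeff, if_pos (by omega)]
      rfl
    · intro i his
      rw [eQ, Qpoly_coeff]
      rcases Nat.eq_zero_or_pos s with hs | hs
      · subst hs
        rw [if_neg (by omega)]
        have : i = 0 := by omega
        subst this
        simp [coeffZ, Finset.sum_range_one]
      · rw [if_pos (by omega)]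
        rfl
    · rw [eP]
      exact (p_eq d s h p q hdeg hsd hpq_eq hpd hpsym hqsym).symm
end

section
/- Let h(t) = ∑_j h_j t^j be a real polynomial and let r ≥ 1 and d ≥ 0 be integers. For n ≥ 0 define a_n := ∑_j h_j·C(d+n-j, d), where C(m, d) := 0 whenever m < d, so that ∑_{n≥0} a_n t^n = h(t)/(1-t)^{d+1}. Then the polynomial g(t) := (h(t)·(1+t+⋯+t^{r-1})^{d+1})^{⟨r,0⟩} satisfies ∑_j g_j·C(d+n-j, d) = a_{rn} for all integers n ≥ 0, where g_j denotes the j-th coefficient of g. -/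
open Polynomial

/-- The binomial coefficient `C(m, k)` for an integer `m`, which is `0` whenever `m < k`. -/
noncomputable def chooseZ (m : ℤ) (k : ℕ) : ℝ :=
  if m < (k : ℤ) then 0 else (m.toNat.choose k : ℝ)

noncomputable def Eser (r d : ℕ) : PowerSeries ℝ :=
  PowerSeries.mk fun n => if r ∣ n then ((d + n / r).choose d : ℝ) else 0

lemma coeff_Eser (r d n : ℕ) : PowerSeries.coeff n (Eser r d) =
    if r ∣ n then ((d + n / r).choose d : ℝ) else 0 := by
  simp [Eser]

lemma coeff_one_sub_pow_mul (r : ℕ) (φ : PowerSeries ℝ) (n : ℕ) :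
    PowerSeries.coeff n (((1 : PowerSeries ℝ) - PowerSeries.X ^ r) * φ) =
      PowerSeries.coeff n φ - (if r ≤ n then PowerSeries.coeff (n - r) φ else 0) := by
  rw [sub_mul, one_mul, map_sub, mul_comm (PowerSeries.X ^ r) φ, PowerSeries.coeff_mul_X_pow']

lemma step_Eser {r : ℕ} (hr : 1 ≤ r) (d : ℕ) :
    ((1 : PowerSeries ℝ) - PowerSeries.X ^ r) * Eser r (d + 1) = Eser r d := by
  ext n
  rw [coeff_one_sub_pow_mul, coeff_Eser, coeff_Eser, coeff_Eser]
  by_cases hn : r ≤ n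
  · by_cases hd : r ∣ n
    · obtain ⟨k, rfl⟩ := hd
      have hk : 1 ≤ k := by
        rcases Nat.eq_zero_or_pos k with h0 | h0
        · subst h0; omega
        · exact h0
      obtain ⟨m, rfl⟩ : ∃ m, k = m + 1 := ⟨k - 1, by omega⟩
      have hsub : r * (m + 1) - r = r * m := by rw [Nat.mul_succ]; omega
      have hdvd2 : r ∣ r * (m + 1) - r := by rw [hsub]; exact Dvd.intro m rfl
      rw [if_pos ⟨m + 1, rfl⟩, if_pos hn, if_pos hdvd2, if_pos ⟨m + 1, rfl⟩, hsub,
        Nat.mul_div_cancel_left _ hr, Nat.mul_div_cancel_left _ hr]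
      have : (d + 1 + (m + 1)).choose (d + 1) =
          (d + (m + 1)).choose d + (d + 1 + m).choose (d + 1) := by
        rw [show d + 1 + (m + 1) = (d + (m + 1)) + 1 from by omega,
          show d + 1 + m = d + (m + 1) from by omega]
        exact Nat.choose_succ_succ' _ _
      rw [this]; push_cast; ring
    · have hd2 : ¬ r ∣ n - r := by
        intro hc
        exact hd (by have := Nat.dvd_add hc (dvd_refl r); rwa [Nat.sub_add_cancel hn] at this)
      rw [if_neg hd, if_neg hd2, if_pos hn, if_neg hd]; ring
  · have hlt : n < r := by omega
    by_cases hd : r ∣ n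
    · have hn0 : n = 0 := by
        rcases Nat.eq_zero_or_pos n with h0 | h0
        · exact h0
        · exact absurd (Nat.le_of_dvd h0 hd) (by omega)
      subst hn0
      rw [if_pos hd, if_pos hd, if_neg hn]
      simp
    · rw [if_neg hd, if_neg hd, if_neg hn]; ring

lemma base_Eser {r : ℕ} (hr : 1 ≤ r) :
    ((1 : PowerSeries ℝ) - PowerSeries.X ^ r) * Eser r 0 = 1 := by
  ext n
  rw [coeff_one_sub_pow_mul, coeff_Eser, coeff_Eser, PowerSeries.coeff_one]
  by_cases hn : r ≤ n
  · rw [if_pos hn]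
    have hne : n ≠ 0 := by omega
    by_cases hd : r ∣ n
    · have hd2 : r ∣ n - r := Nat.dvd_sub hd (dvd_refl r)
      rw [if_pos hd, if_pos hd2, if_neg hne]; simp
    · have hd2 : ¬ r ∣ n - r := by
        intro hc
        exact hd (by have := Nat.dvd_add hc (dvd_refl r); rwa [Nat.sub_add_cancel hn] at this)
      rw [if_neg hd, if_neg hd2, if_neg hne]; ring
  · rcases Nat.eq_zero_or_pos n with h0 | h0
    · subst h0; simp [hn]
    · have hd : ¬ r ∣ n := fun hc => absurd (Nat.le_of_dvd h0 hc) hn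
      rw [if_neg hd, if_neg hn, if_neg (by omega : ¬ n = 0)]; ring

lemma key_Eser {r : ℕ} (hr : 1 ≤ r) (d : ℕ) :
    ((1 : PowerSeries ℝ) - PowerSeries.X ^ r) ^ (d + 1) * Eser r d = 1 := by
  induction d with
  | zero => rw [pow_one]; exact base_Eser hr
  | succ d ih =>
    have hre : ((1 : PowerSeries ℝ) - PowerSeries.X ^ r) ^ (d + 1 + 1) * Eser r (d + 1) =
        ((1 - PowerSeries.X ^ r) ^ (d + 1)) *
          (((1 : PowerSeries ℝ) - PowerSeries.X ^ r) * Eser r (d + 1)) := by ring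
    rw [hre, step_Eser hr, ih]

lemma geom_sub_one : ((1 : PowerSeries ℝ) - PowerSeries.X) * (geomPoly r : PowerSeries ℝ) =
    1 - PowerSeries.X ^ r := by
  have hp : ((1 : ℝ[X]) - Polynomial.X) * geomPoly r = 1 - Polynomial.X ^ r := by
    have := geom_sum_mul (Polynomial.X (R := ℝ)) r
    rw [geomPoly]; linear_combination -this
  have := congrArg (Polynomial.coeToPowerSeries.ringHom (R := ℝ)) hp
  simpa [map_sub, map_mul, map_pow, Polynomial.coeToPowerSeries.ringHom_apply] using this

lemma geom_pow_mul_Eser {r : ℕ} (hr : 1 ≤ r) (d : ℕ) :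
    ((geomPoly r : PowerSeries ℝ)) ^ (d + 1) * Eser r d = Eser 1 d := by
  have h1 : ((1 : PowerSeries ℝ) - PowerSeries.X) ^ (d + 1) * Eser 1 d = 1 := by
    have := key_Eser (r := 1) le_rfl d
    simpa using this
  calc ((geomPoly r : PowerSeries ℝ)) ^ (d + 1) * Eser r d
      = (((1 : PowerSeries ℝ) - PowerSeries.X) * (geomPoly r : PowerSeries ℝ)) ^ (d + 1) *
          Eser r d * Eser 1 d := by
        rw [mul_pow]
        calc _ = ((geomPoly r : PowerSeries ℝ)) ^ (d + 1) * Eser r d *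
            (((1 : PowerSeries ℝ) - PowerSeries.X) ^ (d + 1) * Eser 1 d) := by rw [h1, mul_one]
          _ = _ := by ring
    _ = Eser 1 d := by rw [geom_sub_one, key_Eser hr, one_mul]

lemma coeff_mul_E1 (p : ℝ[X]) (d n : ℕ) :
    PowerSeries.coeff n ((p : PowerSeries ℝ) * Eser 1 d) =
      ∑ j ∈ Finset.range (n + 1), p.coeff j * ((d + (n - j)).choose d : ℝ) := by
  rw [PowerSeries.coeff_mul, Finset.Nat.sum_antidiagonal_eq_sum_range_succ_mk]
  refine Finset.sum_congr rfl fun j hj => ?_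
  rw [Polynomial.coeff_coe, coeff_Eser, if_pos (one_dvd _), Nat.div_one]

lemma chooseZ_eq (d n j : ℕ) (hj : j ≤ n) :
    chooseZ ((d : ℤ) + n - j) d = ((d + (n - j)).choose d : ℝ) := by
  rw [chooseZ, if_neg (by omega)]
  congr 2
  omega

lemma sum_choose_eq (p : ℝ[X]) (d n : ℕ) :
    ∑ j ∈ Finset.range (p.natDegree + 1), p.coeff j * chooseZ ((d : ℤ) + n - j) d =
      PowerSeries.coeff n ((p : PowerSeries ℝ) * Eser 1 d) := by
  rw [coeff_mul_E1]
  have h1 : ∑ j ∈ Finset.range (p.natDegree + 1), p.coeff j * chooseZ ((d : ℤ) + n - j) d =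
      ∑ j ∈ Finset.range (p.natDegree + n + 2), p.coeff j * chooseZ ((d : ℤ) + n - j) d := by
    refine Finset.sum_subset (Finset.range_subset_range.mpr (by omega)) fun j _ hj => ?_
    rw [Polynomial.coeff_eq_zero_of_natDegree_lt (by simp at hj ⊢; omega), zero_mul]
  have h2 : ∑ j ∈ Finset.range (n + 1), p.coeff j * chooseZ ((d : ℤ) + n - j) d =
      ∑ j ∈ Finset.range (p.natDegree + n + 2), p.coeff j * chooseZ ((d : ℤ) + n - j) d := by
    refine Finset.sum_subset (Finset.range_subset_range.mpr (by omega)) fun j _ hj => ?_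
    have hjn : n < j := by simp at hj ⊢; omega
    rw [chooseZ, if_pos (by omega), mul_zero]
  rw [h1, ← h2]
  exact Finset.sum_congr rfl fun j hj => by
    rw [chooseZ_eq d n j (by simp at hj; omega)]

lemma sect_coeff {r : ℕ} (hr : 1 ≤ r) (f : ℝ[X]) (k : ℕ) :
    (sect r 0 f).coeff k = f.coeff (r * k) := by
  rw [sect, Polynomial.finset_sum_coeff]
  simp only [Polynomial.coeff_C_mul, Polynomial.coeff_X_pow, mul_ite, mul_one, mul_zero,
    Nat.add_zero]
  rw [Finset.sum_ite_eq (Finset.range (f.natDegree + 1)) k fun m => f.coeff (r * m)]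
  split
  · rfl
  · next hk =>
    rw [Polynomial.coeff_eq_zero_of_natDegree_lt]
    simp only [Finset.mem_range] at hk
    have : f.natDegree < k := by omega
    calc f.natDegree < k := this
      _ ≤ r * k := Nat.le_mul_of_pos_left k hr

lemma coeff_F_Eser {r : ℕ} (hr : 1 ≤ r) (F : ℝ[X]) (d n : ℕ) :
    PowerSeries.coeff (r * n) ((F : PowerSeries ℝ) * Eser r d) =
      ∑ k ∈ Finset.range (n + 1), F.coeff (r * k) * ((d + (n - k)).choose d : ℝ) := by
  rw [PowerSeries.coeff_mul, Finset.Nat.sum_antidiagonal_eq_sum_range_succ_mk]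
  simp only [Polynomial.coeff_coe, coeff_Eser]
  have himg : (Finset.range (n + 1)).image (fun k => r * k) ⊆ Finset.range (r * n + 1) := by
    intro j hj
    simp only [Finset.mem_image, Finset.mem_range] at hj ⊢
    obtain ⟨k, hk, rfl⟩ := hj
    have : k ≤ n := by omega
    have := Nat.mul_le_mul_left r this
    omega
  rw [← Finset.sum_subset himg]
  · rw [Finset.sum_image (fun a _ b _ hab => by
      exact Nat.eq_of_mul_eq_mul_left (by omega) hab)]
    refine Finset.sum_congr rfl fun k hk => ?_
    have hkn : k ≤ n := by simp at hk; omega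
    have hsub : r * n - r * k = r * (n - k) := (Nat.mul_sub r n k).symm
    rw [hsub, if_pos ⟨n - k, rfl⟩, Nat.mul_div_cancel_left _ hr]
  · intro j hj hjn
    simp only [Finset.mem_range] at hj
    have hdvd : ¬ r ∣ j := by
      rintro ⟨k, rfl⟩
      refine hjn ?_
      simp only [Finset.mem_image, Finset.mem_range]
      refine ⟨k, ?_, rfl⟩
      by_contra hc
      have hk2 : n + 1 ≤ k := by omega
      have := Nat.mul_le_mul_left r hk2
      have hrn : r * (n + 1) = r * n + r := by ring
      omega
    have hdvd2 : ¬ r ∣ r * n - j := by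
      intro hc
      have hle : j ≤ r * n := by omega
      have := Nat.dvd_sub (Dvd.intro n rfl) hc
      rw [Nat.sub_sub_self hle] at this
      exact hdvd this
    rw [if_neg hdvd2, mul_zero]

/-- (Defining property of `U_r^{d+1}`.) Let `a_n = ∑_j h_j·C(d+n-j, d)`,
so that `∑_{n≥0} a_n tⁿ = h(t)/(1-t)^{d+1}`. Then `g = U_r^{d+1} h` satisfies
`∑_j g_j·C(d+n-j, d) = a_{rn}` for all `n ≥ 0`. -/
theorem statement18 (h : ℝ[X]) (r d : ℕ) (hr : 1 ≤ r) :
    ∀ n : ℕ,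
      ∑ j ∈ Finset.range ((Uop r (d + 1) h).natDegree + 1),
          (Uop r (d + 1) h).coeff j * chooseZ ((d : ℤ) + n - j) d =
        ∑ j ∈ Finset.range (h.natDegree + 1),
          h.coeff j * chooseZ ((d : ℤ) + (r * n : ℕ) - j) d := by
  intro n
  rw [sum_choose_eq, sum_choose_eq]
  have hE : ((h * geomPoly r ^ (d + 1) : ℝ[X]) : PowerSeries ℝ) * Eser r d =
      (h : PowerSeries ℝ) * Eser 1 d := by
    rw [Polynomial.coe_mul, Polynomial.coe_pow, mul_assoc, geom_pow_mul_Eser hr]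
  rw [← hE, coeff_F_Eser hr, coeff_mul_E1]
  exact Finset.sum_congr rfl fun k hk => by
    rw [Uop, sect_coeff hr]
end
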